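/- For the Bolthausen-Sznitman coalescent (α = 1), the generating function of the record probabilities satisfies Σ_{i≥2} P(i ∈ T) s^i = s ∫_0^s (-u/((1-u)log(1-u))) du for s ∈ (0,1), where P(i ∈ T) = P(i-2 ∈ S)/Λ_i with Λ_i = i-1 and S the renewal range with interarrival law η{j} = 1/(j(j+1)). -/

import Mathlib

open Real MeasureTheory

private lemma u_bounds (η u : ℕ → ℝ)
    (hη : ∀ j : ℕ, 1 ≤ j → η j = 1 / ((j : ℝ) * ((j : ℝ) + 1)))
    (hu0 : u 0 = 1)
    (hu : ∀ i : ℕ, 1 ≤ i → u i = ∑ j ∈ Finset.range i, η (i - j) * u j) :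
    ∀ k, 0 ≤ u k ∧ u k ≤ 1 := by
  have hηpos : ∀ j : ℕ, 1 ≤ j → 0 ≤ η j := by
    intro j hj; rw [hη j hj]; positivity
  have hηle : ∀ j : ℕ, 1 ≤ j → η j ≤ 1 := by
    intro j hj
    rw [hη j hj]
    rw [div_le_one (by positivity)]
    have : (1:ℝ) ≤ (j:ℝ) := by exact_mod_cast hj
    nlinarith
  intro k
  induction k using Nat.strong_induction_on with
  | _ k ih =>
    rcases Nat.eq_zero_or_pos k with rfl | hk
    · simp [hu0]
    rw [hu k hk]
    constructor
    · apply Finset.sum_nonneg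
      intro j hj
      have hj' : j < k := Finset.mem_range.mp hj
      exact mul_nonneg (hηpos _ (by omega)) (ih j hj').1
    · calc ∑ j ∈ Finset.range k, η (k - j) * u j
          ≤ ∑ j ∈ Finset.range k, η (k - j) := by
            apply Finset.sum_le_sum
            intro j hj
            have hj' : j < k := Finset.mem_range.mp hj
            have h1 := ih j hj'
            have h2 := hηpos (k-j) (by omega)
            nlinarith
      _ = ∑ m ∈ Finset.range k, η (m+1) := by
            rw [← Finset.sum_range_reflect]
            apply Finset.sum_congr rfl
            intro i hi
            have : i < k := Finset.mem_range.mp hi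
            congr 1
            omega
      _ = 1 - 1/((k:ℝ)+1) := by
            have : ∀ m ∈ Finset.range k, η (m+1)
                = (fun m : ℕ => 1/((m:ℝ)+1)) m - (fun m : ℕ => 1/((m:ℝ)+1)) (m+1) := by
              intro m _
              rw [hη (m+1) (by omega)]
              push_cast
              have h1 : ((m:ℝ)+1) ≠ 0 := by positivity
              have h2 : ((m:ℝ)+2) ≠ 0 := by positivity
              field_simp
              ring
            rw [Finset.sum_congr rfl this, Finset.sum_range_sub' (fun m : ℕ => 1/((m:ℝ)+1))]
            norm_num
      _ ≤ 1 := by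
            have : (0:ℝ) < (k:ℝ)+1 := by positivity
            have : 0 ≤ 1/((k:ℝ)+1) := by positivity
            linarith

private lemma gen_fun (η u : ℕ → ℝ)
    (hη : ∀ j : ℕ, 1 ≤ j → η j = 1 / ((j : ℝ) * ((j : ℝ) + 1)))
    (hu0 : u 0 = 1)
    (hu : ∀ i : ℕ, 1 ≤ i → u i = ∑ j ∈ Finset.range i, η (i - j) * u j)
    (t : ℝ) (ht : t ∈ Set.Ioo (0:ℝ) 1) :
    HasSum (fun k : ℕ => u k * t ^ k) (-t / ((1 - t) * Real.log (1 - t))) := by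
  obtain ⟨ht0, ht1⟩ := ht
  have hub := u_bounds η u hη hu0 hu
  have habs : |t| < 1 := by rw [abs_of_pos ht0]; exact ht1
  have hlogneg : Real.log (1 - t) < 0 := Real.log_neg (by linarith) (by linarith)
  set L : ℝ := -Real.log (1 - t) with hL
  have hLpos : 0 < L := by simp [hL]; linarith
  -- log series
  have h1 : HasSum (fun n : ℕ => t ^ (n + 1) / ((n : ℝ) + 1)) L :=
    hasSum_pow_div_log_of_abs_lt_one habs
  -- shifted log series
  have h2 : HasSum (fun n : ℕ => t ^ (n + 2) / ((n : ℝ) + 2)) (L - t) := by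
    have h2' : HasSum (fun n : ℕ => t ^ ((n+1) + 1) / (((n+1 : ℕ) : ℝ) + 1)) (L - t) := by
      apply (hasSum_nat_add_iff (f := fun n : ℕ => t ^ (n + 1) / ((n : ℝ) + 1)) 1).2
      simpa using h1
    convert h2' using 2 with n
    push_cast
    ring_nf
  -- series for η
  have h3 : HasSum (fun n : ℕ => t ^ (n + 1) / (((n : ℝ) + 1) * ((n : ℝ) + 2)))
      (L - (L - t) / t) := by
    have := h1.sub (h2.div_const t)
    convert this using 1
    · rfl
    funext n
    have hn1 : ((n:ℝ)+1) ≠ 0 := by positivity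
    have hn2 : ((n:ℝ)+2) ≠ 0 := by positivity
    have htne : t ≠ 0 := ne_of_gt ht0
    rw [pow_succ t (n+1)]
    field_simp
    ring
  set Hval : ℝ := L - (L - t) / t with hHval
  set fseq : ℕ → ℝ := fun n => if n = 0 then 0 else η n * t ^ n with hfseq
  have hf : HasSum fseq Hval := by
    have hshift : HasSum (fun n : ℕ => fseq (n + 1)) Hval := by
      convert h3 using 2 with n
      simp only [hfseq, Nat.succ_ne_zero, if_false]
      rw [hη (n+1) (by omega)]
      push_cast
      ring
    have := (hasSum_nat_add_iff (f := fseq) 1).1 hshift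
    simpa [hfseq] using this
  -- summability of g
  have hg_sum : Summable (fun k : ℕ => u k * t ^ k) := by
    apply Summable.of_nonneg_of_le
      (fun k => mul_nonneg (hub k).1 (by positivity))
      (fun k => ?_) (summable_geometric_of_lt_one ht0.le ht1)
    have := (hub k).2
    nlinarith [pow_nonneg ht0.le k]
  set U : ℝ := ∑' k, u k * t ^ k with hU
  have hg : HasSum (fun k : ℕ => u k * t ^ k) U := hg_sum.hasSum
  -- norm summability
  have hfn : Summable (fun n : ℕ => ‖fseq n‖) := by
    apply Summable.of_nonneg_of_le (fun n => norm_nonneg _) (fun n => ?_)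
      (summable_geometric_of_lt_one ht0.le ht1)
    rcases Nat.eq_zero_or_pos n with rfl | hn
    · simp [hfseq]
    · simp only [hfseq, Nat.pos_iff_ne_zero.mp hn, if_false]
      rw [Real.norm_eq_abs, abs_of_nonneg]
      · have hle : η n ≤ 1 := by
          rw [hη n hn]
          rw [div_le_one (by positivity)]
          have : (1:ℝ) ≤ (n:ℝ) := by exact_mod_cast hn
          nlinarith
        nlinarith [pow_nonneg ht0.le n]
      · rw [hη n hn]; positivity
  have hgn : Summable (fun k : ℕ => ‖u k * t ^ k‖) := by
    apply Summable.of_nonneg_of_le (fun n => norm_nonneg _) (fun k => ?_)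
      (summable_geometric_of_lt_one ht0.le ht1)
    rw [Real.norm_eq_abs, abs_of_nonneg (mul_nonneg (hub k).1 (by positivity))]
    nlinarith [pow_nonneg ht0.le k, (hub k).2]
  -- Cauchy product
  have hcauchy := tsum_mul_tsum_eq_tsum_sum_range_of_summable_norm hfn hgn
  rw [hf.tsum_eq, hg.tsum_eq] at hcauchy
  -- compute the inner sums
  have hinner : ∀ n : ℕ, (∑ k ∈ Finset.range (n + 1), fseq k * (u (n - k) * t ^ (n - k)))
      = if n = 0 then 0 else u n * t ^ n := by
    intro n
    rcases Nat.eq_zero_or_pos n with rfl | hn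
    · simp [hfseq]
    rw [Finset.sum_range_succ']
    simp only [hfseq, Nat.succ_ne_zero, if_false, if_pos rfl, zero_mul, add_zero,
      Nat.pos_iff_ne_zero.mp hn]
    have : ∀ i ∈ Finset.range n, η (i+1) * t ^ (i+1) * (u (n - (i+1)) * t ^ (n - (i+1)))
        = η (i+1) * u (n - 1 - i) * t ^ n := by
      intro i hi
      have hi' : i < n := Finset.mem_range.mp hi
      have e1 : n - (i+1) = n - 1 - i := by omega
      have e2 : t ^ (i+1) * t ^ (n - (i+1)) = t ^ n := by
        rw [← pow_add]; congr 1; omega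
      rw [e1]
      calc η (i+1) * t ^ (i+1) * (u (n - 1 - i) * t ^ (n - 1 - i))
          = η (i+1) * u (n - 1 - i) * (t ^ (i+1) * t ^ (n - (i+1))) := by rw [← e1]; ring
        _ = η (i+1) * u (n - 1 - i) * t ^ n := by rw [e2]
    rw [Finset.sum_congr rfl this, ← Finset.sum_mul]
    have := Finset.sum_range_reflect (fun j => η (n - j) * u j) n
    have hr : ∑ i ∈ Finset.range n, η (i+1) * u (n - 1 - i)
        = ∑ j ∈ Finset.range n, η (n - j) * u j := by
      rw [← this]
      apply Finset.sum_congr rfl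
      intro i hi
      have hi' : i < n := Finset.mem_range.mp hi
      congr 2
      omega
    rw [hr, ← hu n hn]
  -- sum of inner = U - 1
  have hIsum : HasSum (fun n : ℕ => if n = 0 then (0:ℝ) else u n * t ^ n) (U - 1) := by
    have hsh : HasSum (fun n : ℕ => u (n+1) * t ^ (n+1)) (U - 1) := by
      apply (hasSum_nat_add_iff (f := fun k : ℕ => u k * t ^ k) 1).2
      simpa [hu0] using hg
    have hsh' : HasSum (fun n : ℕ =>
        (fun m : ℕ => if m = 0 then (0:ℝ) else u m * t ^ m) (n + 1)) (U - 1) := by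
      simpa using hsh
    have := (hasSum_nat_add_iff
      (f := fun m : ℕ => if m = 0 then (0:ℝ) else u m * t ^ m) 1).1 hsh'
    simpa using this
  have heq : Hval * U = U - 1 := by
    rw [hcauchy]
    have : (fun n : ℕ => ∑ k ∈ Finset.range (n + 1), fseq k * (u (n - k) * t ^ (n - k)))
        = fun n : ℕ => if n = 0 then (0:ℝ) else u n * t ^ n := funext hinner
    rw [this, hIsum.tsum_eq]
  -- solve for U
  have htne : t ≠ 0 := ne_of_gt ht0
  have hkey : 1 - Hval = L * (1 - t) / t := by
    rw [hHval]; field_simp; ring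
  have hden : L * (1 - t) / t ≠ 0 := by
    apply div_ne_zero _ htne
    apply mul_ne_zero (ne_of_gt hLpos)
    linarith
  have hUval : U = t / (L * (1 - t)) := by
    have h5 : U * (1 - Hval) = 1 := by linarith [heq]
    rw [hkey] at h5
    rw [← mul_div_assoc, div_eq_one_iff_eq htne] at h5
    rw [eq_div_iff (by apply mul_ne_zero (ne_of_gt hLpos); linarith)]
    linarith
  have : -t / ((1 - t) * Real.log (1 - t)) = U := by
    rw [hUval, hL, neg_div, ← div_neg]
    congr 1
    ring
  rw [this]
  exact hg

private lemma int_pow_Ioo (s : ℝ) (hs : 0 < s) (c : ℝ) (k : ℕ) :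
    ∫ t in Set.Ioo (0:ℝ) s, c * t ^ k = c * s ^ (k + 1) / ((k : ℝ) + 1) := by
  rw [← MeasureTheory.integral_Ioc_eq_integral_Ioo,
    ← intervalIntegral.integral_of_le hs.le]
  rw [intervalIntegral.integral_const_mul, integral_pow,
    zero_pow (Nat.succ_ne_zero k)]
  ring

/-- Generating function of the record probabilities of the Bolthausen–Sznitman coalescent:
`P(i ∈ T) = P(i-2 ∈ S)/(i-1)` where `S` is the renewal range for `η j = 1/(j(j+1))`;
the sum over `i ≥ 2` is reindexed by `i = k + 2`. -/
theorem stmt_14 (η u : ℕ → ℝ)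
    (hη : ∀ j : ℕ, 1 ≤ j → η j = 1 / ((j : ℝ) * ((j : ℝ) + 1)))
    (hu0 : u 0 = 1)
    (hu : ∀ i : ℕ, 1 ≤ i → u i = ∑ j ∈ Finset.range i, η (i - j) * u j)
    (s : ℝ) (hs : s ∈ Set.Ioo (0:ℝ) 1) :
    (∑' k : ℕ, u k / ((k : ℝ) + 1) * s ^ (k + 2)) =
      s * ∫ t in Set.Ioo (0:ℝ) s, -t / ((1 - t) * Real.log (1 - t)) := by
  obtain ⟨hs0, hs1⟩ := hs
  have hub := u_bounds η u hη hu0 hu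
  -- integrability of each term
  have hF_int : ∀ k : ℕ, IntegrableOn (fun t : ℝ => u k * t ^ k) (Set.Ioo (0:ℝ) s) := by
    intro k
    apply MeasureTheory.IntegrableOn.mono_set _ Set.Ioo_subset_Icc_self
    exact (continuous_const.mul (continuous_pow k)).continuousOn.integrableOn_Icc
  -- norm integrals
  have hnorm : ∀ k : ℕ, (∫ t in Set.Ioo (0:ℝ) s, ‖u k * t ^ k‖)
      = u k * s ^ (k + 1) / ((k : ℝ) + 1) := by
    intro k
    rw [← int_pow_Ioo s hs0 (u k) k]
    apply MeasureTheory.setIntegral_congr_fun measurableSet_Ioo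
    intro t ht
    exact Real.norm_of_nonneg (mul_nonneg (hub k).1 (pow_nonneg ht.1.le k))
  have hF_sum : Summable (fun k : ℕ => ∫ t in Set.Ioo (0:ℝ) s, ‖u k * t ^ k‖) := by
    simp_rw [hnorm]
    apply Summable.of_nonneg_of_le (fun k => ?_) (fun k => ?_)
      ((summable_geometric_of_lt_one hs0.le hs1).mul_left s)
    · have := (hub k).1
      positivity
    · have h1 := (hub k).2
      have h2 : (0:ℝ) < (k:ℝ) + 1 := by positivity
      have h3 : (0:ℝ) ≤ s ^ k := pow_nonneg hs0.le k
      rw [div_le_iff₀ h2, pow_succ]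
      have h4 : (0:ℝ) ≤ (k:ℝ) := Nat.cast_nonneg k
      have h5 : (0:ℝ) ≤ s ^ k * s := mul_nonneg h3 hs0.le
      calc u k * (s ^ k * s) ≤ 1 * (s ^ k * s) :=
            mul_le_mul_of_nonneg_right h1 h5
        _ = s * s ^ k := by ring
        _ ≤ s * s ^ k * ((k:ℝ) + 1) := by nlinarith
  -- swap sum and integral
  have hswap := MeasureTheory.integral_tsum_of_summable_integral_norm
    (F := fun (k : ℕ) (t : ℝ) => u k * t ^ k)
    (μ := MeasureTheory.volume.restrict (Set.Ioo (0:ℝ) s)) hF_int hF_sum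
  -- pointwise identity on Ioo 0 s
  have hpt : ∀ t ∈ Set.Ioo (0:ℝ) s, (∑' k : ℕ, u k * t ^ k)
      = -t / ((1 - t) * Real.log (1 - t)) := by
    intro t ht
    exact (gen_fun η u hη hu0 hu t ⟨ht.1, lt_trans ht.2 hs1⟩).tsum_eq
  have hint : (∫ t in Set.Ioo (0:ℝ) s, ∑' k : ℕ, u k * t ^ k)
      = ∫ t in Set.Ioo (0:ℝ) s, -t / ((1 - t) * Real.log (1 - t)) :=
    MeasureTheory.setIntegral_congr_fun measurableSet_Ioo hpt
  rw [← hint, ← hswap]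
  -- now compute the series
  rw [← tsum_mul_left]
  apply tsum_congr
  intro k
  rw [int_pow_Ioo s hs0 (u k) k]
  have hk : ((k:ℝ) + 1) ≠ 0 := by positivity
  field_simp
  ring
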